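/- Let L be a modular lattice with a matroidal bi-coloring (as in the diamond axioms). If a covering [z, y] projects upward to a covering [x, w] (i.e. z = x ∧ y, w = x ∨ y, y covers z, w covers x) and [z, y] is green, then [x, w] is green; equivalently, if [x, w] is red then [z, y] is red. -/

import Mathlib

/-- A red/green bi-coloring of the coverings of a lattice (`red a b` meaning the covering
`[a, b]` is colored red, `¬ red a b` meaning it is green) is *matroidal* if every interval
of height 2 (diamond) is of one of four types: all coverings red; all coverings green;
all lower coverings red and all upper coverings green; or exactly one lower covering green
with the covering above it being the unique red upper covering. -/
def IsMatroidalColoring {L : Type*} [Lattice L] (red : L → L → Prop) : Prop :=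
  ∀ u w : L, (∃ v, u ⋖ v ∧ v ⋖ w) →
    ((∀ v, u ⋖ v → v ⋖ w → red u v ∧ red v w) ∨
     (∀ v, u ⋖ v → v ⋖ w → ¬ red u v ∧ ¬ red v w) ∨
     (∀ v, u ⋖ v → v ⋖ w → red u v ∧ ¬ red v w) ∨
     (∃ v₀, u ⋖ v₀ ∧ v₀ ⋖ w ∧ ¬ red u v₀ ∧ red v₀ w ∧
        ∀ v, u ⋖ v → v ⋖ w → v ≠ v₀ → red u v ∧ ¬ red v w))

/-- A lattice has finite height if the lengths of its strict chains are bounded. -/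
def FiniteHeight (L : Type*) [Lattice L] : Prop :=
  ∃ n : ℕ, ∀ c : List L, c.Chain' (· < ·) → c.length ≤ n + 1

section Aux
variable {L : Type*} [Lattice L]

/-- In a lattice of finite height, any element strictly below `b` has a cover below `b`. -/
lemma exists_covBy_le' (hfin : FiniteHeight L) {a b : L} (hab : a < b) :
    ∃ t, a ⋖ t ∧ t ≤ b := by
  by_contra h
  push_neg at h
  have step : ∀ t : {t : L // a < t ∧ t ≤ b}, ∃ t' : {t : L // a < t ∧ t ≤ b}, t'.1 < t.1 := by
    rintro ⟨t, ht1, ht2⟩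
    have hnc : ¬ a ⋖ t := fun hc => (h t hc ht2).elim
    rw [covBy_iff_lt_and_eq_or_eq] at hnc
    push_neg at hnc
    obtain ⟨c, hc1, hc2, hc3, hc4⟩ := hnc ht1
    have h1 : a < c := hc1.lt_of_ne (Ne.symm hc3)
    have h2 : c < t := hc2.lt_of_ne hc4
    exact ⟨⟨c, h1, h2.le.trans ht2⟩, h2⟩
  choose g hg using step
  obtain ⟨n, hn⟩ := hfin
  set F : ℕ → {t : L // a < t ∧ t ≤ b} := fun k => g^[k] ⟨b, hab, le_rfl⟩ with hF
  have hanti : StrictAnti fun k => (F k).1 := by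
    apply strictAnti_nat_of_succ_lt
    intro k
    have h1 : F (k + 1) = g (F k) := Function.iterate_succ_apply' g k _
    rw [h1]; exact hg (F k)
  set l : List L := (List.range (n + 2)).map (fun i => (F (n + 1 - i)).1) with hl
  have hlen : l.length = n + 2 := by simp [hl]
  have hchain : l.Chain' (· < ·) := by
    show List.IsChain _ l
    rw [List.isChain_iff_getElem]
    intro i hi
    rw [hlen] at hi
    simp only [hl, List.get_eq_getElem, List.getElem_map, List.getElem_range]
    exact hanti (by omega)
  have := hn l hchain
  omega

variable {red : L → L → Prop}

/-- One diamond step: in a height-2 interval with distinct atoms `a`, `b`, if `[z,b]` is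
green then so is `[a,w]`. -/
lemma diamond_step (hred : IsMatroidalColoring red) {z a b w : L}
    (hza : z ⋖ a) (hzb : z ⋖ b) (haw : a ⋖ w) (hbw : b ⋖ w) (hab : a ≠ b)
    (hg : ¬ red z b) : ¬ red a w := by
  rcases hred z w ⟨b, hzb, hbw⟩ with h | h | h | ⟨v₀, hv1, hv2, hv3, hv4, hv5⟩
  · exact absurd (h b hzb hbw).1 hg
  · exact (h a hza haw).2
  · exact absurd (h b hzb hbw).1 hg
  · by_cases hb : b = v₀
    · exact (hv5 a hza haw (hb ▸ hab)).2
    · exact absurd (hv5 b hzb hbw hb).1 hg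

/-- Induction on a bound for the lengths of chains in the interval `[z, x]`. -/
lemma aux_proj [IsModularLattice L]
    (hfin : FiniteHeight L) (hred : IsMatroidalColoring red) :
    ∀ k : ℕ, ∀ x y z w : L,
      (∀ c : List L, c.Chain' (· < ·) → (∀ a ∈ c, z ≤ a ∧ a ≤ x) → c.length ≤ k) →
      z = x ⊓ y → w = x ⊔ y → z ⋖ y → x ⋖ w → ¬ red z y → ¬ red x w := by
  intro k
  induction k with
  | zero =>
    intro x y z w hb hz hw hzy hxw hg
    have h1 : z ≤ x := hz ▸ inf_le_left
    have := hb [z] (List.isChain_singleton z) (by simpa using h1)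
    simp at this
  | succ k ih =>
    intro x y z w hb hz hw hzy hxw hg
    have hzx : z ≤ x := hz ▸ inf_le_left
    rcases eq_or_lt_of_le hzx with heq | hlt
    · have hxy : x ≤ y := by rw [← heq, hz]; exact inf_le_right
      have hwy : w = y := by rw [hw, sup_eq_right.mpr hxy]
      rw [← heq, hwy]; exact hg
    · obtain ⟨t, hzt, htx⟩ := exists_covBy_le' hfin hlt
      have hty : t ≠ y := by
        rintro rfl
        exact absurd (le_antisymm (hz ▸ le_inf htx le_rfl) hzt.le).symm hzt.lt.ne
      have htiy : t ⊓ y = z := le_antisymm (hz ▸ inf_le_inf_right y htx) (le_inf hzt.le hzy.le)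
      have hty' : t ⋖ t ⊔ y := (htiy.symm ▸ hzy : t ⊓ y ⋖ y).sup_of_inf_right
      have hyty : y ⋖ t ⊔ y := (htiy.symm ▸ hzt : t ⊓ y ⋖ t).sup_of_inf_left
      have hgreen' : ¬ red t (t ⊔ y) := diamond_step hred hzt hzy hty' hyty hty hg
      rcases eq_or_lt_of_le htx with rfl | htltx
      · rw [hw]; exact hgreen'
      · apply ih x (t ⊔ y) t w _ _ _ hty' hxw hgreen'
        · intro c hc hmem
          have hbc := hb (z :: c) ?_ ?_
          · simpa using hbc
          · show List.IsChain _ (z :: c)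
            rw [List.isChain_cons]
            refine ⟨fun y' hy' => hzt.lt.trans_le (hmem y' (List.mem_of_mem_head? hy')).1, hc⟩
          · intro a ha
            rcases List.mem_cons.mp ha with rfl | ha
            · exact ⟨le_rfl, hzx⟩
            · exact ⟨hzt.le.trans (hmem a ha).1, (hmem a ha).2⟩
        · rw [sup_comm, ← inf_sup_assoc_of_le _ htx, ← hz, sup_eq_right.mpr hzt.le]
        · rw [hw, ← sup_assoc, sup_eq_left.mpr htx]

end Aux

/-- In a modular lattice of finite height with a matroidal bi-coloring: if a covering
`[z, y]` projects upward to a covering `[x, w]` (i.e. `z = x ⊓ y`, `w = x ⊔ y`, `y` covers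
`z` and `w` covers `x`) and `[z, y]` is green, then `[x, w]` is green; equivalently, if
`[x, w]` is red then `[z, y]` is red. -/
theorem green_projects_upward {L : Type*} [Lattice L] [IsModularLattice L]
    (hfin : FiniteHeight L) (red : L → L → Prop) (hred : IsMatroidalColoring red)
    (x y z w : L) (hz : z = x ⊓ y) (hw : w = x ⊔ y)
    (hzy : z ⋖ y) (hxw : x ⋖ w) (hgreen : ¬ red z y) :
    ¬ red x w := by
  obtain ⟨n, hn⟩ := hfin
  exact aux_proj ⟨n, hn⟩ hred (n + 1) x y z w (fun c hc _ => hn c hc) hz hw hzy hxw hgreen
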